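/- Given two Slepian-Wolf codes (g₁, ψ₁) for source X with side information Y and (g₂, ψ₂) for source Y with side information X, with codeword index sets of sizes M₁ and M₂ respectively, there exists a complementary delivery code (f, φ₁, φ₂) with codeword set of size max(M₁, M₂) such that for every pair (x,y): if ψ₁(g₁(x), y) = x then φ₁(f(x,y), y) = x, and if ψ₂(g₂(y), x) = y then φ₂(f(x,y), x) = y. Consequently, for any joint source (Xⁿ, Yⁿ), the error probability of φ₁ is at most that of ψ₁∘g₁, and similarly for φ₂. -/

import Mathlib

/-- From two Slepian-Wolf codes `(g₁,ψ₁)` (for `X` with side information `Y`)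
and `(g₂,ψ₂)` (for `Y` with side information `X`), with index-set sizes `M₁` and `M₂`,
there exists a complementary delivery code `(f,φ₁,φ₂)` with index set of size `max M₁ M₂`
such that correct SW decoding implies correct complementary-delivery decoding pointwise;
consequently for every joint source distribution the error probability of `φ₁` is at most
that of `ψ₁ ∘ g₁`, and similarly for `φ₂`. -/
theorem stmt1 (Xn Yn : Type) [Fintype Xn] [Fintype Yn] [DecidableEq Xn] [DecidableEq Yn]
    (M₁ M₂ : ℕ) (hM₁ : 0 < M₁) (hM₂ : 0 < M₂)
    (g₁ : Xn → Fin M₁) (ψ₁ : Fin M₁ → Yn → Xn)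
    (g₂ : Yn → Fin M₂) (ψ₂ : Fin M₂ → Xn → Yn) :
    ∃ (f : Xn → Yn → Fin (max M₁ M₂)) (φ₁ : Fin (max M₁ M₂) → Yn → Xn)
      (φ₂ : Fin (max M₁ M₂) → Xn → Yn),
      (∀ x y, ψ₁ (g₁ x) y = x → φ₁ (f x y) y = x) ∧
      (∀ x y, ψ₂ (g₂ y) x = y → φ₂ (f x y) x = y) ∧
      (∀ P : Xn × Yn → ℝ, (∀ z, 0 ≤ P z) →
        (∑ z : Xn × Yn, if φ₁ (f z.1 z.2) z.2 ≠ z.1 then P z else 0) ≤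
          ∑ z : Xn × Yn, if ψ₁ (g₁ z.1) z.2 ≠ z.1 then P z else 0) ∧
      (∀ P : Xn × Yn → ℝ, (∀ z, 0 ≤ P z) →
        (∑ z : Xn × Yn, if φ₂ (f z.1 z.2) z.1 ≠ z.2 then P z else 0) ≤
          ∑ z : Xn × Yn, if ψ₂ (g₂ z.2) z.1 ≠ z.2 then P z else 0) := by
  have hM : 0 < max M₁ M₂ := lt_max_of_lt_left hM₁
  haveI : NeZero (max M₁ M₂) := ⟨hM.ne'⟩
  set e₁ : Xn → Fin (max M₁ M₂) := fun x => Fin.castLE (le_max_left _ _) (g₁ x) with he₁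
  set e₂ : Yn → Fin (max M₁ M₂) := fun y => Fin.castLE (le_max_right _ _) (g₂ y) with he₂
  refine ⟨fun x y => e₁ x + e₂ y,
    fun m y => if h : (m - e₂ y).val < M₁ then ψ₁ ⟨(m - e₂ y).val, h⟩ y else ψ₁ ⟨0, hM₁⟩ y,
    fun m x => if h : (m - e₁ x).val < M₂ then ψ₂ ⟨(m - e₁ x).val, h⟩ x else ψ₂ ⟨0, hM₂⟩ x,
    ?_, ?_, ?_, ?_⟩
  · intro x y hx
    have key : e₁ x + e₂ y - e₂ y = e₁ x := add_sub_cancel_right _ _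
    simp only [key]
    have hv : (e₁ x).val < M₁ := (g₁ x).isLt
    rw [dif_pos hv]
    have : (⟨(e₁ x).val, hv⟩ : Fin M₁) = g₁ x := by
      apply Fin.ext; rfl
    rw [this, hx]
  · intro x y hy
    have key : e₁ x + e₂ y - e₁ x = e₂ y := add_sub_cancel_left _ _
    simp only [key]
    have hv : (e₂ y).val < M₂ := (g₂ y).isLt
    rw [dif_pos hv]
    have : (⟨(e₂ y).val, hv⟩ : Fin M₂) = g₂ y := by
      apply Fin.ext; rfl
    rw [this, hy]
  · intro P hP
    apply Finset.sum_le_sum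
    intro z _
    by_cases h : ψ₁ (g₁ z.1) z.2 = z.1
    · have key : e₁ z.1 + e₂ z.2 - e₂ z.2 = e₁ z.1 := add_sub_cancel_right _ _
      have hv : (e₁ z.1).val < M₁ := (g₁ z.1).isLt
      have heq : (⟨(e₁ z.1).val, hv⟩ : Fin M₁) = g₁ z.1 := Fin.ext rfl
      rw [if_neg, if_neg]
      · simp [h]
      · simp only [key, dif_pos hv, heq, h, ne_eq, not_true_eq_false, not_false_eq_true]
    · rw [if_pos h]
      split
      · exact le_refl _
      · exact hP z
  · intro P hP
    apply Finset.sum_le_sum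
    intro z _
    by_cases h : ψ₂ (g₂ z.2) z.1 = z.2
    · have key : e₁ z.1 + e₂ z.2 - e₁ z.1 = e₂ z.2 := add_sub_cancel_left _ _
      have hv : (e₂ z.2).val < M₂ := (g₂ z.2).isLt
      have heq : (⟨(e₂ z.2).val, hv⟩ : Fin M₂) = g₂ z.2 := Fin.ext rfl
      rw [if_neg, if_neg]
      · simp [h]
      · simp only [key, dif_pos hv, heq, h, ne_eq, not_true_eq_false, not_false_eq_true]
    · rw [if_pos h]
      split
      · exact le_refl _
      · exact hP z
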